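/- The XOR cellular automaton f : {0,1}^ℤ → {0,1}^ℤ defined by f(x)_i = 1 if and only if x_i + x_{i+1} ≡ 1 (mod 2) is not von Neumann regular in End({0,1}^ℤ). -/

import Mathlib

/-- The shift map on the full shift `A^ℤ`: `σ(x)_i = x_{i+1}`. -/
def shiftMap {A : Type*} (x : ℤ → A) : ℤ → A := fun i => x (i + 1)

/-- A cellular automaton on the full shift `A^ℤ` (with the product topology,
`A` discrete): a continuous map commuting with the shift. -/
def IsCA {A : Type*} [TopologicalSpace A] (f : (ℤ → A) → (ℤ → A)) : Prop :=
  Continuous f ∧ ∀ x, f (shiftMap x) = shiftMap (f x)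

/-- `f` is von Neumann regular in the monoid `End(A^ℤ)` of cellular automata:
there is a CA `h` with `f ∘ h ∘ f = f` and `h ∘ f ∘ h = h`. -/
def IsRegularCA {A : Type*} [TopologicalSpace A] (f : (ℤ → A) → (ℤ → A)) : Prop :=
  ∃ h : (ℤ → A) → (ℤ → A), IsCA h ∧ f ∘ h ∘ f = f ∧ h ∘ f ∘ h = h

/-- point mass at n -/
def pt (n : ℤ) : ℤ → Bool := fun i => decide (i = n)

lemma shift_iter (k : ℕ) (y : ℤ → Bool) (i : ℤ) : shiftMap^[k] y i = y (i + k) := by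
  induction k generalizing i with
  | zero => simp
  | succ k ih =>
    rw [Function.iterate_succ_apply', shiftMap, ih]
    congr 1; push_cast; ring

/-- The XOR cellular automaton `f(x)_i = 1 ↔ x_i + x_{i+1} ≡ 1 (mod 2)` is not
von Neumann regular in `End({0,1}^ℤ)`. -/
theorem stmt5 (f : (ℤ → Bool) → (ℤ → Bool))
    (hf : ∀ (x : ℤ → Bool) (i : ℤ),
      f x i = true ↔ ((x i).toNat + (x (i + 1)).toNat) % 2 = 1) :
    ¬ IsRegularCA f := by
  rintro ⟨h, ⟨hcont, hcomm⟩, hfhf, -⟩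
  -- f as xor
  have fx : ∀ x i, f x i = xor (x i) (x (i + 1)) := by
    intro x i
    rw [Bool.eq_iff_iff, hf]
    cases hx : x i <;> cases hx' : x (i + 1) <;> simp
  -- h commutes with iterates of shift
  have hcomm' : ∀ (k : ℕ) y, h (shiftMap^[k] y) = shiftMap^[k] (h y) := by
    intro k
    induction k with
    | zero => intro y; simp
    | succ k ih =>
      intro y
      rw [Function.iterate_succ_apply, ih, hcomm, ← Function.iterate_succ_apply]
  -- pt 0 is in the image of f
  have hu : f (fun i => decide (1 ≤ i)) = pt 0 := by
    funext i
    rw [fx, pt]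
    by_cases hi : i = 0
    · subst hi; simp
    · rcases lt_or_gt_of_ne hi with hlt | hgt
      · have h1 : ¬ (1 ≤ i) := by omega
        have h2 : ¬ (1 ≤ i + 1) := by omega
        simp [h1, h2, hi]
      · have h1 : (1 ≤ i) := by omega
        have h2 : (1 ≤ i + 1) := by omega
        simp [h1, h2, hi]
  set x : ℤ → Bool := h (pt 0) with hxdef
  have hfx : f x = pt 0 := by
    have := congrFun hfhf (fun i => decide (1 ≤ i))
    simpa [Function.comp, hu] using this
  -- structure of x
  have hstep : ∀ i : ℤ, i ≠ 0 → x i = x (i + 1) := by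
    intro i hi
    have := congrFun hfx i
    rw [fx] at this
    simp only [pt] at this
    rw [decide_eq_false hi] at this
    cases h1 : x i <;> cases h2 : x (i + 1) <;> simp [h1, h2] at this ⊢
  have hne : x 0 ≠ x 1 := by
    have := congrFun hfx 0
    rw [fx] at this
    simp only [pt, decide_eq_true_eq] at this
    intro heq
    rw [show (0:ℤ)+1 = 1 by ring, ← heq] at this
    cases h1 : x 0 <;> simp [h1] at this
  have hleft : ∀ n : ℕ, x (-(n:ℤ)) = x 0 := by
    intro n
    induction n with
    | zero => simp
    | succ n ih =>
      have hs := hstep (-(n:ℤ) - 1) (by omega)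
      rw [show -(n:ℤ) - 1 + 1 = -(n:ℤ) by ring] at hs
      push_cast
      rw [show -((n:ℤ)+1) = -(n:ℤ) - 1 by ring, hs, ih]
  have hright : ∀ n : ℕ, x (1 + n) = x 1 := by
    intro n
    induction n with
    | zero => simp
    | succ n ih =>
      have hs := hstep (1 + (n:ℤ)) (by omega)
      push_cast
      rw [show ((1:ℤ) + ((n:ℤ)+1)) = (1 + (n:ℤ)) + 1 by ring, ← hs, ih]
  -- h of zero is constant c
  set z0 : ℤ → Bool := fun _ => false with hz0
  have hz0shift : shiftMap z0 = z0 := rfl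
  have hinv : shiftMap (h z0) = h z0 := by rw [← hcomm, hz0shift]
  set c : Bool := h z0 0 with hc
  have hconst : ∀ i : ℤ, h z0 i = c := by
    intro i
    induction i using Int.induction_on with
    | zero => rfl
    | succ k ih =>
      have hs := congrFun hinv k
      simp only [shiftMap] at hs
      rw [hs]; exact ih
    | pred k ih =>
      have hs := congrFun hinv (-(k:ℤ) - 1)
      simp only [shiftMap] at hs
      rw [show -(k:ℤ) - 1 + 1 = -(k:ℤ) by ring] at hs
      exact hs.symm.trans ih
  -- shift identities
  have hpt1 : ∀ n : ℕ, shiftMap^[n] (pt 0) = pt (-(n:ℤ)) := by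
    intro n; funext i; rw [shift_iter, pt, pt, decide_eq_decide]; omega
  have hpt2 : ∀ n : ℕ, shiftMap^[n] (pt (n:ℤ)) = pt 0 := by
    intro n; funext i; rw [shift_iter, pt, pt, decide_eq_decide]; omega
  -- evaluate h at shifted points
  have hA : ∀ n : ℕ, h (pt (-(n:ℤ))) 0 = x n := by
    intro n
    rw [← hpt1, hcomm' n (pt 0), shift_iter, ← hxdef, zero_add]
  have hB : ∀ n : ℕ, h (pt (n:ℤ)) 0 = x (-(n:ℤ)) := by
    intro n
    have : h (pt 0) = shiftMap^[n] (h (pt (n:ℤ))) := by rw [← hcomm', hpt2]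
    have := congrFun this (-(n:ℤ))
    rw [shift_iter] at this
    simp only [neg_add_cancel] at this
    rw [← this, ← hxdef]
  -- continuity: pt (±n) → z0
  have htend : ∀ (g : ℕ → ℤ), (∀ i : ℤ, ∀ᶠ n : ℕ in Filter.atTop, g n ≠ i) →
      Filter.Tendsto (fun n => h (pt (g n)) 0) Filter.atTop (nhds c) := by
    intro g hg
    have h1 : Filter.Tendsto (fun n => pt (g n)) Filter.atTop (nhds z0) := by
      rw [tendsto_pi_nhds]
      intro i
      have hev : (fun _ : ℕ => z0 i) =ᶠ[Filter.atTop] (fun n => pt (g n) i) := by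
        filter_upwards [hg i] with n hn
        simp only [pt, z0]
        exact (decide_eq_false (fun hh => hn hh.symm)).symm
      exact Filter.Tendsto.congr' hev tendsto_const_nhds
    have h2 := (hcont.tendsto z0).comp h1
    have h3 := ((continuous_apply (0:ℤ)).tendsto (h z0)).comp h2
    rw [show h z0 0 = c from rfl] at h3
    exact h3
  have hgrow : ∀ᶠ n : ℕ in Filter.atTop, ∀ i : ℤ, i.natAbs < n → True := by simp
  have hEA : ∀ᶠ n : ℕ in Filter.atTop, h (pt (-(n:ℤ))) 0 = c := by
    have := htend (fun n => -(n:ℤ)) (by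
      intro i
      filter_upwards [Filter.eventually_gt_atTop i.natAbs] with n hn
      omega)
    rw [nhds_discrete] at this
    exact Filter.tendsto_pure.mp this
  have hEB : ∀ᶠ n : ℕ in Filter.atTop, h (pt ((n:ℤ))) 0 = c := by
    have := htend (fun n => (n:ℤ)) (by
      intro i
      filter_upwards [Filter.eventually_gt_atTop i.natAbs] with n hn
      omega)
    rw [nhds_discrete] at this
    exact Filter.tendsto_pure.mp this
  obtain ⟨n, hn1, hA', hB'⟩ := ((Filter.eventually_ge_atTop 1).and (hEA.and hEB)).exists
  rw [hA n] at hA'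
  rw [hB n] at hB'
  have e1 : x n = x 1 := by
    have := hright (n - 1)
    rw [show (1:ℤ) + ((n:ℕ) - 1 : ℕ) = (n:ℤ) by omega] at this
    exact this
  have e2 : x (-(n:ℤ)) = x 0 := hleft n
  exact hne (by rw [← e2, hB', ← hA', e1])
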